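/- Let N ≥ 1 be an integer and let m ≥ 2 be an even integer. Then Tr(Σ_{i₁,…,i_m=1}^N X_{i₁ i₂} X_{i₂ i₃} ⋯ X_{i_{m−1} i_m} X_{i_m i₁}) = (N−1)^m − 1 + N². Equivalently, the value of the so(N) weight system in the standard representation on the standard cycle (1,2,…,m) equals ((N−1)^m − 1 + N²)/N. -/

import Mathlib

open Matrix

/-- The standard generators `X_{ij} = E_{ij} - E_{N+1-j, N+1-i}` of `so(N)`,
as `N × N` matrices over `ℚ` (indices zero-based, so `N+1-i` becomes `Fin.rev i`). -/
noncomputable def soGen (N : ℕ) (i j : Fin N) : Matrix (Fin N) (Fin N) ℚ :=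
  Matrix.single i j 1 - Matrix.single j.rev i.rev 1

/-- `W_N(α) = Tr (Σ_{i₁,…,i_m} X_{i₁ i_{α(1)}} ⋯ X_{i_m i_{α(m)}})`,
the (un-normalized) standard-representation so(N) weight of a permutation
`α` of `{1,…,m}`; the product is taken in order of increasing position. -/
noncomputable def soWeight (N m : ℕ) (α : Equiv.Perm (Fin m)) : ℚ :=
  Matrix.trace (∑ i : Fin m → Fin N,
    ((List.finRange m).map fun k => soGen N (i k) (i (α k))).prod)

namespace SoAux

variable {ι : Type*} [Fintype ι] [DecidableEq ι]

/-- open chain product of a matrix-valued kernel along a vertex path -/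
noncomputable def oProd (g : ι → ι → Matrix ι ι ℚ) :
    (n : ℕ) → (Fin (n+1) → ι) → ι → Matrix ι ι ℚ
  | 0, i, q => g (i 0) q
  | (n+1), i, q => g (i 0) (i 1) * oProd g n (i ∘ Fin.succ) q

/-- scalar path sum for a big kernel -/
noncomputable def pSum (T : Matrix (ι × ι) (ι × ι) ℚ) : ℕ → (ι × ι) → (ι × ι) → ℚ
  | 0, p, q => T p q
  | (n+1), p, q => ∑ r, T p r * pSum T n r q

lemma pow_eq_pSum (T : Matrix (ι × ι) (ι × ι) ℚ) :
    ∀ (n : ℕ) (p q : ι × ι), (T ^ (n+1)) p q = pSum T n p q := by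
  intro n
  induction n with
  | zero => intro p q; simp [pSum]
  | succ n ih =>
      intro p q
      rw [pow_succ']
      simp [Matrix.mul_apply, pSum, ih]

lemma listprod_eq_oProd (g : ι → ι → Matrix ι ι ℚ) :
    ∀ (n : ℕ) (i : Fin (n+1) → ι) (q : ι),
    ((List.finRange (n+1)).map fun k =>
        g (i k) (if h : (k : ℕ) + 1 < n + 1 then i ⟨(k : ℕ) + 1, h⟩ else q)).prod
      = oProd g n i q := by
  intro n
  induction n with
  | zero =>
      intro i q
      simp [List.finRange_succ, oProd]
  | succ n ih =>
      intro i q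
      rw [List.finRange_succ, List.map_cons, List.map_map, List.prod_cons]
      have h1 : (fun k => g (i k) (if h : (k : ℕ) + 1 < n + 1 + 1 then i ⟨(k : ℕ) + 1, h⟩ else q)) ∘ Fin.succ
          = fun k : Fin (n+1) => g ((i ∘ Fin.succ) k)
              (if h : (k : ℕ) + 1 < n + 1 then (i ∘ Fin.succ) ⟨(k : ℕ) + 1, h⟩ else q) := by
        funext k
        simp only [Function.comp_apply, Fin.val_succ]
        by_cases h : (k : ℕ) + 1 < n + 1
        · rw [dif_pos h, dif_pos (by omega : (k : ℕ) + 1 + 1 < n + 1 + 1)]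
          rfl
        · rw [dif_neg h, dif_neg (by omega : ¬ ((k : ℕ) + 1 + 1 < n + 1 + 1))]
      rw [h1, ih]
      show g (i 0) (dite _ _ _) * _ = _
      simp only [Fin.val_zero]
      erw [dif_pos (by omega : (0:ℕ) + 1 < n + 1 + 1)]
      show g (i 0) (i ⟨1, _⟩) * _ = oProd g (n+1) i q
      have : (⟨1, by omega⟩ : Fin (n+2)) = 1 := rfl
      rw [this]
      rfl

omit [DecidableEq ι] in
lemma chain_sum (g : ι → ι → Matrix ι ι ℚ) (T : Matrix (ι × ι) (ι × ι) ℚ)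
    (hT : ∀ p q : ι × ι, T p q = g p.2 q.2 p.1 q.1) :
    ∀ (n : ℕ) (p2 p1 : ι) (y : ι × ι),
      (∑ i : Fin n → ι, (oProd g n (Fin.cons p2 i) y.2) p1 y.1) = pSum T n (p1, p2) y := by
  intro n
  induction n with
  | zero =>
      intro p2 p1 y
      simp [oProd, pSum, hT]
  | succ n ih =>
      intro p2 p1 y
      have key : ∀ i : Fin (n+1) → ι,
          oProd g (n+1) (Fin.cons p2 i) y.2 = g p2 (i 0) * oProd g n i y.2 := by
        intro i
        have e1 : (Fin.cons p2 i : Fin (n+2) → ι) 1 = i 0 := by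
          rw [← Fin.succ_zero_eq_one, Fin.cons_succ]
        have e2 : (Fin.cons p2 i : Fin (n+2) → ι) ∘ Fin.succ = i := by
          funext k; simp [Fin.cons_succ]
        simp only [oProd, Fin.cons_zero, e1, e2]
      calc (∑ i : Fin (n+1) → ι, (oProd g (n+1) (Fin.cons p2 i) y.2) p1 y.1)
          = ∑ i : Fin (n+1) → ι, ∑ b, g p2 (i 0) p1 b * (oProd g n i y.2) b y.1 := by
            simp [key, Matrix.mul_apply]
        _ = ∑ z : ι × (Fin n → ι), ∑ b, g p2 ((Fin.cons z.1 z.2 : Fin (n+1) → ι) 0) p1 b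
              * (oProd g n (Fin.cons z.1 z.2) y.2) b y.1 := by
            rw [← Equiv.sum_comp (Fin.consEquiv (fun _ : Fin (n+1) => ι))
              (fun i => ∑ b, g p2 (i 0) p1 b * (oProd g n i y.2) b y.1)]
            rfl
        _ = ∑ r : ι, ∑ b : ι, T (p1, p2) (b, r) * pSum T n (b, r) y := by
            rw [Fintype.sum_prod_type]
            refine Finset.sum_congr rfl fun r _ => ?_
            rw [Finset.sum_comm]
            refine Finset.sum_congr rfl fun b _ => ?_
            simp only [Fin.cons_zero]
            rw [← Finset.mul_sum, ih r b y, hT (p1, p2) (b, r)]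
        _ = pSum T (n+1) (p1, p2) y := by
            show _ = ∑ z : ι × ι, T (p1,p2) z * pSum T n z y
            rw [Fintype.sum_prod_type, Finset.sum_comm]

noncomputable def Pm (N : ℕ) : Matrix (Fin N × Fin N) (Fin N × Fin N) ℚ :=
  Matrix.of fun x y => if x.1 = x.2 ∧ y.1 = y.2 then 1 else 0

noncomputable def Qm (N : ℕ) : Matrix (Fin N × Fin N) (Fin N × Fin N) ℚ :=
  Matrix.of fun x y => if x.1 = y.2.rev ∧ y.1 = x.2.rev then 1 else 0

/-- the big transfer matrix -/
noncomputable def Tm (N : ℕ) : Matrix (Fin N × Fin N) (Fin N × Fin N) ℚ :=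
  Matrix.of fun x y => soGen N x.2 y.2 x.1 y.1

lemma Tm_eq (N : ℕ) : Tm N = Pm N - Qm N := by
  ext ⟨a, i⟩ ⟨b, j⟩
  simp only [Tm, Pm, Qm, Matrix.sub_apply, Matrix.of_apply, soGen,
    Matrix.single, Matrix.of_apply]
  congr 1 <;> (congr 1; exact propext (and_congr eq_comm eq_comm))

lemma Pm_mul_Pm (N : ℕ) : Pm N * Pm N = (N : ℚ) • Pm N := by
  ext x y
  simp only [Matrix.mul_apply, Matrix.smul_apply, Pm, Matrix.of_apply, smul_eq_mul]
  rw [Fintype.sum_prod_type]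
  simp [ite_and, Finset.sum_ite_eq, mul_comm]
  split_ifs <;> rfl

lemma Pm_mul_Qm (N : ℕ) : Pm N * Qm N = Pm N := by
  ext ⟨a,i⟩ ⟨b,j⟩
  simp only [Matrix.mul_apply, Pm, Qm, Matrix.of_apply]
  rw [Fintype.sum_prod_type]
  simp [ite_and, Finset.sum_ite_eq, Finset.sum_ite_eq', Fin.rev_rev, eq_comm,
    Fin.rev_eq_iff, Fin.rev_inj]
  have hsw : ∀ x : Fin N, (b = x.rev) = (x = b.rev) := fun x => propext (by
    rw [eq_comm, Fin.rev_eq_iff])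
  simp only [hsw, Finset.sum_ite_eq', Finset.mem_univ, if_true, Fin.rev_inj, Fin.rev_rev]

lemma Qm_mul_Pm (N : ℕ) : Qm N * Pm N = Pm N := by
  ext ⟨a,i⟩ ⟨b,j⟩
  simp only [Matrix.mul_apply, Pm, Qm, Matrix.of_apply]
  rw [Fintype.sum_prod_type]
  simp [ite_and, Finset.sum_ite_eq, Finset.sum_ite_eq', Fin.rev_rev, eq_comm,
    Fin.rev_eq_iff, Fin.rev_inj]
  have hsw : ∀ x : Fin N, (a = x.rev) = (x = a.rev) := fun x => propext (by
    rw [eq_comm, Fin.rev_eq_iff])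
  simp only [hsw, Finset.sum_ite_eq', Finset.mem_univ, if_true, Fin.rev_inj, Fin.rev_rev]
  all_goals split_ifs <;> simp_all

lemma Qm_mul_Qm (N : ℕ) : Qm N * Qm N = 1 := by
  ext ⟨a,i⟩ ⟨b,j⟩
  simp only [Matrix.mul_apply, Qm, Matrix.of_apply, Matrix.one_apply]
  rw [Fintype.sum_prod_type]
  simp [ite_and, Finset.sum_ite_eq, Finset.sum_ite_eq', Fin.rev_rev, eq_comm,
    Fin.rev_eq_iff, Fin.rev_inj, Prod.ext_iff]
  have hsw : ∀ x : Fin N, (b = x.rev) = (x = b.rev) := fun x => propext (by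
    rw [eq_comm, Fin.rev_eq_iff])
  simp only [hsw, Finset.sum_ite_eq', Finset.mem_univ, if_true, Fin.rev_inj, Fin.rev_rev]

lemma trace_Pm (N : ℕ) : Matrix.trace (Pm N) = (N : ℚ) := by
  rw [Matrix.trace]
  rw [show (∑ i, Matrix.diag (Pm N) i) = ∑ i : Fin N × Fin N, (Pm N) i i from rfl]
  rw [Fintype.sum_prod_type]
  simp [Pm, Finset.sum_ite_eq]

lemma Tm_sq (N : ℕ) : Tm N ^ 2 = 1 + ((N : ℚ) - 2) • Pm N := by
  rw [Tm_eq, sq, sub_mul, mul_sub, mul_sub, Pm_mul_Pm, Pm_mul_Qm, Qm_mul_Pm, Qm_mul_Qm]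
  module

lemma one_add_smul_mul (N : ℕ) (c d : ℚ) :
    (1 + c • Pm N) * (1 + d • Pm N) = 1 + (c + d + c * d * (N : ℚ)) • Pm N := by
  have h : (c • Pm N) * (d • Pm N) = (c * d * (N : ℚ)) • Pm N := by
    rw [smul_mul_assoc, mul_smul_comm, Pm_mul_Pm, smul_smul, smul_smul, mul_assoc]
  rw [mul_add, mul_one, add_mul, one_mul, h]
  module

lemma Tm_pow (N : ℕ) (hN : (N : ℚ) ≠ 0) : ∀ k : ℕ,
    Tm N ^ (2*k+2) = 1 + ((((N : ℚ) - 1) ^ (2*k+2) - 1) / N) • Pm N := by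
  intro k
  induction k with
  | zero =>
      have hc : (((N : ℚ) - 1) ^ (2*0+2) - 1) / N = (N : ℚ) - 2 := by
        field_simp
        ring
      rw [hc, show 2*0+2 = 2 from rfl, Tm_sq]
  | succ k ih =>
      have h2 : 2*(k+1)+2 = (2*k+2)+2 := by ring
      rw [h2, pow_add, ih, Tm_sq, one_add_smul_mul]
      congr 1
      have hc : (((N : ℚ) - 1) ^ (2*k+2) - 1) / N + ((N : ℚ) - 2)
            + ((((N : ℚ) - 1) ^ (2*k+2) - 1) / N) * ((N : ℚ) - 2) * N
          = (((N : ℚ) - 1) ^ ((2*k+2)+2) - 1) / N := by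
        field_simp
        ring
      rw [hc]

lemma finRotate_eq (n : ℕ) (k : Fin (n+1)) :
    finRotate (n+1) k = if h : (k : ℕ) + 1 < n + 1 then (⟨(k : ℕ) + 1, h⟩ : Fin (n+1)) else 0 := by
  rw [finRotate_succ_apply]
  by_cases h : (k : ℕ) + 1 < n + 1
  · rw [dif_pos h]
    apply Fin.ext
    rw [Fin.val_add_one_of_lt (show k < Fin.last n by
      rw [Fin.lt_iff_val_lt_val, Fin.val_last]; omega)]
  · rw [dif_neg h]
    have hk : k = Fin.last n := by
      apply Fin.ext
      rw [Fin.val_last]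
      have := k.isLt
      omega
    rw [hk, Fin.last_add_one]

lemma soWeight_eq_trace (N n : ℕ) :
    soWeight N (n+1) (finRotate (n+1)) = Matrix.trace (Tm N ^ (n+1)) := by
  have hT : ∀ p q : Fin N × Fin N, Tm N p q = soGen N p.2 q.2 p.1 q.1 := fun p q => rfl
  rw [soWeight, Matrix.trace_sum]
  have step1 : ∀ i : Fin (n+1) → Fin N,
      ((List.finRange (n+1)).map fun k => soGen N (i k) (i (finRotate (n+1) k))).prod
        = oProd (soGen N) n i (i 0) := by
    intro i
    rw [← listprod_eq_oProd (soGen N) n i (i 0)]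
    congr 1
    apply List.map_congr_left
    intro k _
    rw [finRotate_eq n k]
    by_cases h : (k : ℕ) + 1 < n + 1
    · rw [dif_pos h, dif_pos h]
    · rw [dif_neg h, dif_neg h]
  calc (∑ i : Fin (n+1) → Fin N,
        Matrix.trace ((List.finRange (n+1)).map fun k => soGen N (i k) (i (finRotate (n+1) k))).prod)
      = ∑ i : Fin (n+1) → Fin N, ∑ a : Fin N, (oProd (soGen N) n i (i 0)) a a := by
        refine Finset.sum_congr rfl fun i _ => ?_
        rw [step1 i]
        rfl
    _ = ∑ z : Fin N × (Fin n → Fin N), ∑ a : Fin N,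
          (oProd (soGen N) n (Fin.cons z.1 z.2) ((Fin.cons z.1 z.2 : Fin (n+1) → Fin N) 0)) a a := by
        rw [← Equiv.sum_comp (Fin.consEquiv (fun _ : Fin (n+1) => Fin N))
          (fun i => ∑ a : Fin N, (oProd (soGen N) n i (i 0)) a a)]
        rfl
    _ = ∑ r : Fin N, ∑ a : Fin N, pSum (Tm N) n (a, r) (a, r) := by
        rw [Fintype.sum_prod_type]
        refine Finset.sum_congr rfl fun r _ => ?_
        rw [Finset.sum_comm]
        refine Finset.sum_congr rfl fun a _ => ?_
        have := chain_sum (soGen N) (Tm N) hT n r a (a, r)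
        simp only [Fin.cons_zero]
        exact this
    _ = ∑ x : Fin N × Fin N, (Tm N ^ (n+1)) x x := by
        rw [Fintype.sum_prod_type, Finset.sum_comm]
        refine Finset.sum_congr rfl fun r _ => ?_
        refine Finset.sum_congr rfl fun a _ => ?_
        rw [pow_eq_pSum]
    _ = Matrix.trace (Tm N ^ (n+1)) := rfl

end SoAux

/-- The value of the trace sum on the standard cycle `(1,2,…,m)` for even `m ≥ 2`
is `(N-1)^m - 1 + N²` (i.e. the so(N) weight system in the standard representation
takes the value `((N-1)^m - 1 + N²)/N` on the standard cycle). -/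
theorem soWeight_standardCycle_even (N m : ℕ) (hN : 1 ≤ N) (hm : 2 ≤ m)
    (hme : Even m) :
    soWeight N m (finRotate m) = ((N : ℚ) - 1) ^ m - 1 + (N : ℚ) ^ 2 := by
  have hNQ : (N : ℚ) ≠ 0 := by
    have : (0 : ℚ) < N := by exact_mod_cast hN
    linarith
  obtain ⟨r, hr⟩ := hme
  have hk : ∃ k : ℕ, m = 2*k + 2 := ⟨r - 1, by omega⟩
  obtain ⟨k, hkm⟩ := hk
  have hm1 : m = (2*k+1) + 1 := by omega
  rw [hm1] at *
  rw [SoAux.soWeight_eq_trace N (2*k+1)]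
  rw [show (2*k+1) + 1 = 2*k+2 from rfl, SoAux.Tm_pow N hNQ k]
  rw [Matrix.trace_add, Matrix.trace_smul, SoAux.trace_Pm, Matrix.trace_one]
  simp only [smul_eq_mul]
  rw [div_mul_cancel₀ _ hNQ]
  have hcard : (Fintype.card (Fin N × Fin N) : ℚ) = (N : ℚ) ^ 2 := by
    simp [Fintype.card_prod]
    ring
  rw [hcard]
  ring
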